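/- Arrow comparison: for any unit types U, U' and types T, T' of the Add type system, if U'→T' ≼ U→T, then there exist type variables X⃗ and unit types V⃗ such that U→T ≡ (U'→T')[V⃗/X⃗]. -/
import Mathlib


set_option maxHeartbeats 1000000

/-! ## Terms of the non-deterministic call-by-value λ-calculus (de Bruijn indices) -/

inductive Tm : Type
  | var : ℕ → Tm
  | lam : Tm → Tm
  | app : Tm → Tm → Tm
  | add : Tm → Tm → Tm
  | zero : Tm
  deriving DecidableEq

namespace Tm

/-- Values: variables and abstractions. -/
inductive IsValue : Tm → Prop
  | var (n : ℕ) : IsValue (var n)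
  | lam (t : Tm) : IsValue (lam t)

/-- de Bruijn shifting: add `d` to every variable index `≥ c`. -/
def shift (d c : ℕ) : Tm → Tm
  | var n => if n < c then var n else var (n + d)
  | lam t => lam (shift d (c + 1) t)
  | app t u => app (shift d c t) (shift d c u)
  | add t u => add (shift d c t) (shift d c u)
  | zero => zero

/-- Capture-avoiding substitution of the variable `k` by `v` (removing the binder). -/
def subst (k : ℕ) (v : Tm) : Tm → Tm
  | var n => if n = k then shift k 0 v else if k < n then var (n - 1) else var n
  | lam t => lam (subst (k + 1) v t)
  | app t u => app (subst k v t) (subst k v u)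
  | add t u => add (subst k v t) (subst k v u)
  | zero => zero

/-- `ClosedUnder k t`: every free variable of `t` has index `< k`. -/
def ClosedUnder (k : ℕ) : Tm → Prop
  | var n => n < k
  | lam t => ClosedUnder (k + 1) t
  | app t u => ClosedUnder k t ∧ ClosedUnder k u
  | add t u => ClosedUnder k t ∧ ClosedUnder k u
  | zero => True

/-- Closed terms. -/
def Closed (t : Tm) : Prop := ClosedUnder 0 t

end Tm

open Tm

/-- The AC-equivalence on terms: the least congruence making `+`
associative and commutative (terms are considered modulo `Aeq`). -/
inductive Aeq : Tm → Tm → Prop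
  | refl (t : Tm) : Aeq t t
  | symm : Aeq t u → Aeq u t
  | trans : Aeq t u → Aeq u s → Aeq t s
  | comm (t u : Tm) : Aeq (.add t u) (.add u t)
  | assoc (t u s : Tm) : Aeq (.add t (.add u s)) (.add (.add t u) s)
  | lamCongr : Aeq t t' → Aeq (.lam t) (.lam t')
  | appCongr : Aeq t t' → Aeq u u' → Aeq (.app t u) (.app t' u')
  | addCongr : Aeq t t' → Aeq u u' → Aeq (.add t u) (.add t' u')

/-- One-step reduction (the five rewrite rules plus β, closed under all
contexts, and performed modulo the AC-equivalence of terms). -/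
inductive Step : Tm → Tm → Prop
  | distrRight (t u s : Tm) : Step (.app (.add t u) s) (.add (.app t s) (.app u s))
  | distrLeft (t u s : Tm) : Step (.app t (.add u s)) (.add (.app t u) (.app t s))
  | zeroApp (t : Tm) : Step (.app .zero t) .zero
  | appZero (t : Tm) : Step (.app t .zero) .zero
  | addZero (t : Tm) : Step (.add t .zero) t
  | beta (t v : Tm) : IsValue v → Step (.app (.lam t) v) (Tm.subst 0 v t)
  | appLeft : Step t t' → Step (.app t u) (.app t' u)
  | appRight : Step u u' → Step (.app t u) (.app t u')
  | addLeft : Step t t' → Step (.add t u) (.add t' u)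
  | addRight : Step u u' → Step (.add t u) (.add t u')
  | lamCongr : Step t t' → Step (.lam t) (.lam t')
  | ac : Aeq t t' → Step t' u' → Aeq u' u → Step t u

/-- Strong normalisation of a term: accessibility of the inverse reduction. -/
def SN (t : Tm) : Prop := Acc (fun a b => Step b a) t

/-- The set of strongly normalising closed terms. -/
def SNset : Set Tm := {t | Closed t ∧ SN t}

/-- Pseudo-values: abstractions and sums of pseudo-values. -/
inductive PseudoValue : Tm → Prop
  | lam (t : Tm) : PseudoValue (.lam t)
  | add : PseudoValue t → PseudoValue u → PseudoValue (.add t u)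

/-- Neutral terms: closed terms that are not pseudo-values. -/
def Neutral (t : Tm) : Prop := Closed t ∧ ¬ PseudoValue t

/-- The set of one-step reducts of `t`. -/
def Red (t : Tm) : Set Tm := {u | Step t u}

/-- The set of reducts (in any number of steps, including zero) of terms of `S`. -/
def RedStar (S : Set Tm) : Set Tm := {u | ∃ t ∈ S, Relation.ReflTransGen Step t u}

/-- The closure of a set of terms under (CR3). -/
inductive Clo (S : Set Tm) : Tm → Prop
  | base {t : Tm} : t ∈ S → Clo S t
  | step {t : Tm} : Neutral t → (∀ u, Step t u → Clo S u) → Clo S t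

/-- `clo S`: the least set containing `S` and closed under (CR3). -/
def clo (S : Set Tm) : Set Tm := {t | Clo S t}

/-- Reducibility candidates. -/
structure IsCandidate (A : Set Tm) : Prop where
  cr1 : A ⊆ SNset
  cr2 : ∀ t ∈ A, Red t ⊆ A
  cr3 : ∀ t, Neutral t → Red t ⊆ A → t ∈ A

/-- The arrow operator on sets of closed terms. -/
def CArrow (A B : Set Tm) : Set Tm := {t | Closed t ∧ ∀ u ∈ A, Tm.app t u ∈ B}

/-- The sum of two sets of (AC-classes of) terms. -/
def CSum (A B : Set Tm) : Set Tm := {s | ∃ t ∈ A, ∃ u ∈ B, Aeq s (Tm.add t u)}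

/-- The ⊞ operator on reducibility candidates. -/
def CPlus (A B : Set Tm) : Set Tm := clo (CSum A B ∪ A ∪ B)

/-! ## Types of the Add type system -/

mutual
  /-- Unit types. -/
  inductive UTy : Type
    | var : ℕ → UTy
    | arrow : UTy → Ty → UTy
    | all : UTy → UTy

  /-- Types. -/
  inductive Ty : Type
    | unit : UTy → Ty
    | add : Ty → Ty → Ty
    | zero : Ty
end

mutual
  /-- Shifting of type variables in unit types. -/
  def UTy.shift (d c : ℕ) : UTy → UTy
    | .var n => if n < c then .var n else .var (n + d)
    | .arrow U T => .arrow (UTy.shift d c U) (Ty.shift d c T)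
    | .all U => .all (UTy.shift d (c + 1) U)

  /-- Shifting of type variables in types. -/
  def Ty.shift (d c : ℕ) : Ty → Ty
    | .unit U => .unit (UTy.shift d c U)
    | .add T R => .add (Ty.shift d c T) (Ty.shift d c R)
    | .zero => .zero
end

mutual
  /-- Substitution of the (bound) type variable `k` by `V` in a unit type. -/
  def UTy.subst (k : ℕ) (V : UTy) : UTy → UTy
    | .var n => if n = k then UTy.shift k 0 V else if k < n then .var (n - 1) else .var n
    | .arrow U T => .arrow (UTy.subst k V U) (Ty.subst k V T)
    | .all U => .all (UTy.subst (k + 1) V U)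

  /-- Substitution of the (bound) type variable `k` by `V` in a type. -/
  def Ty.subst (k : ℕ) (V : UTy) : Ty → Ty
    | .unit U => .unit (UTy.subst k V U)
    | .add T R => .add (Ty.subst k V T) (Ty.subst k V R)
    | .zero => .zero
end

/-- Iterated substitution `U[V⃗/X⃗]` for a unit type under `|Vs|` quantifiers. -/
def UTy.msubst (Vs : List UTy) (U : UTy) : UTy := Vs.foldl (fun A V => UTy.subst 0 V A) U

/-- Iterated substitution `T[V⃗/X⃗]` for a type under `|Vs|` quantifiers. -/
def Ty.msubst (Vs : List UTy) (T : Ty) : Ty := Vs.foldl (fun A V => Ty.subst 0 V A) T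

mutual
  /-- Substitution of the free type variable `X` (seen at depth `c`) by `V` in a unit type. -/
  def UTy.replAux (X : ℕ) (V : UTy) (c : ℕ) : UTy → UTy
    | .var n => if n = X + c then UTy.shift c 0 V else .var n
    | .arrow U T => .arrow (UTy.replAux X V c U) (Ty.replAux X V c T)
    | .all U => .all (UTy.replAux X V (c + 1) U)

  /-- Substitution of the free type variable `X` (seen at depth `c`) by `V` in a type. -/
  def Ty.replAux (X : ℕ) (V : UTy) (c : ℕ) : Ty → Ty
    | .unit U => .unit (UTy.replAux X V c U)
    | .add T R => .add (Ty.replAux X V c T) (Ty.replAux X V c R)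
    | .zero => .zero
end

/-- Capture-avoiding substitution `U[V/X]` of a free type variable. -/
def UTy.repl (X : ℕ) (V : UTy) (U : UTy) : UTy := UTy.replAux X V 0 U

/-- Capture-avoiding substitution `T[V/X]` of a free type variable. -/
def Ty.repl (X : ℕ) (V : UTy) (T : Ty) : Ty := Ty.replAux X V 0 T

mutual
  /-- Abstraction of the free type variable `X` (at depth `c`), used to form `∀X.U`. -/
  def UTy.absAux (X c : ℕ) : UTy → UTy
    | .var n => if n = X + c then .var c else if c ≤ n then .var (n + 1) else .var n
    | .arrow U T => .arrow (UTy.absAux X c U) (Ty.absAux X c T)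
    | .all U => .all (UTy.absAux X (c + 1) U)

  /-- Abstraction of the free type variable `X` (at depth `c`) in a type. -/
  def Ty.absAux (X c : ℕ) : Ty → Ty
    | .unit U => .unit (UTy.absAux X c U)
    | .add T R => .add (Ty.absAux X c T) (Ty.absAux X c R)
    | .zero => .zero
end

/-- `∀X.U`: universal quantification of the free type variable `X` in `U`. -/
def UTy.genAll (X : ℕ) (U : UTy) : UTy := .all (UTy.absAux X 0 U)

mutual
  /-- `X` occurs free in a unit type. -/
  def UTy.Free (n : ℕ) : UTy → Prop
    | .var m => m = n
    | .arrow U T => UTy.Free n U ∨ Ty.Free n T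
    | .all U => UTy.Free (n + 1) U

  /-- `X` occurs free in a type. -/
  def Ty.Free (n : ℕ) : Ty → Prop
    | .unit U => UTy.Free n U
    | .add T R => Ty.Free n T ∨ Ty.Free n R
    | .zero => False
end

mutual
  /-- Equivalence of unit types (the least congruence making `+` on types
  associative, commutative, with neutral element `𝟘`). -/
  inductive UEq : UTy → UTy → Prop
    | refl (U : UTy) : UEq U U
    | symm : UEq U V → UEq V U
    | trans : UEq U V → UEq V W → UEq U W
    | arrow : UEq U U' → TEq T T' → UEq (.arrow U T) (.arrow U' T')
    | all : UEq U U' → UEq (.all U) (.all U')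

  /-- Equivalence of types: the least congruence such that
  `T+R ≡ R+T`, `T+(R+S) ≡ (T+R)+S` and `T+𝟘 ≡ T`. -/
  inductive TEq : Ty → Ty → Prop
    | refl (T : Ty) : TEq T T
    | symm : TEq T R → TEq R T
    | trans : TEq T R → TEq R S → TEq T S
    | unit : UEq U U' → TEq (.unit U) (.unit U')
    | addCongr : TEq T T' → TEq R R' → TEq (.add T R) (.add T' R')
    | comm (T R : Ty) : TEq (.add T R) (.add R T)
    | assoc (T R S : Ty) : TEq (.add T (.add R S)) (.add (.add T R) S)
    | zero (T : Ty) : TEq (.add T .zero) T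
end

/-- `Σ_{i} T_i`, with the empty sum being `𝟘`. -/
def sumT (Ts : List Ty) : Ty := Ts.foldl Ty.add Ty.zero

/-- `∀X₁.…∀X_k.U`. -/
def allN : ℕ → UTy → UTy
  | 0, U => U
  | k + 1, U => .all (allN k U)

/-- Lifting of type variables in a typing context (for ∀-introduction). -/
def liftCtx (Γ : List UTy) : List UTy := Γ.map (UTy.shift 1 0)

/-! ## The Add type system -/

/-- Typing judgements of the Add type system. -/
inductive Typing : List UTy → Tm → Ty → Prop
  | ax {Γ : List UTy} {n : ℕ} {U : UTy} : Γ[n]? = some U → Typing Γ (.var n) (.unit U)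
  | axZero {Γ : List UTy} : Typing Γ .zero .zero
  | equiv {Γ t T R} : Typing Γ t T → TEq T R → Typing Γ t R
  | arrI {Γ U t T} : Typing (U :: Γ) t T → Typing Γ (.lam t) (.unit (.arrow U T))
  | arrE {Γ t u} {k : ℕ} {U : UTy} {Ts : List Ty} {Vs : List (List UTy)} :
      Ts ≠ [] → Vs ≠ [] → (∀ V ∈ Vs, V.length = k) →
      Typing Γ t (sumT (Ts.map fun Ti => .unit (allN k (.arrow U Ti)))) →
      Typing Γ u (sumT (Vs.map fun Vj => .unit (UTy.msubst Vj U))) →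
      Typing Γ (.app t u)
        (sumT ((Ts.map fun Ti => Vs.map fun Vj => Ty.msubst Vj Ti).flatten))
  | addI {Γ t u T R} : Typing Γ t T → Typing Γ u R → Typing Γ (.add t u) (.add T R)
  | allE {Γ t U} (V : UTy) : Typing Γ t (.unit (.all U)) → Typing Γ t (.unit (UTy.subst 0 V U))
  | allI {Γ t U} : Typing (liftCtx Γ) t (.unit U) → Typing Γ t (.unit (.all U))

/-! ## Interpretation of types by reducibility candidates -/

/-- Extension of a valuation. -/
def consV (A : Set Tm) (ρ : ℕ → Set Tm) : ℕ → Set Tm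
  | 0 => A
  | n + 1 => ρ n

mutual
  /-- Interpretation of unit types. -/
  def interpU : UTy → (ℕ → Set Tm) → Set Tm
    | .var n, ρ => ρ n
    | .arrow U T, ρ => CArrow (interpU U ρ) (interpT T ρ)
    | .all U, ρ => {t | ∀ A : Set Tm, IsCandidate A → t ∈ interpU U (consV A ρ)}

  /-- Interpretation of types. -/
  def interpT : Ty → (ℕ → Set Tm) → Set Tm
    | .unit U, ρ => interpU U ρ
    | .add T R, ρ => CPlus (interpT T ρ) (interpT R ρ)
    | .zero, _ => clo ∅
end

/-- Lifting of a simultaneous substitution under a binder. -/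
def liftSub (σ : ℕ → Tm) : ℕ → Tm
  | 0 => .var 0
  | n + 1 => Tm.shift 1 0 (σ n)

/-- Simultaneous substitution `t_σ` of all free term variables of `t`. -/
def Tm.msubst (σ : ℕ → Tm) : Tm → Tm
  | .var n => σ n
  | .lam t => .lam (Tm.msubst (liftSub σ) t)
  | .app t u => .app (Tm.msubst σ t) (Tm.msubst σ u)
  | .add t u => .add (Tm.msubst σ t) (Tm.msubst σ u)
  | .zero => .zero

/-! ## The relations ⋖ and ≼ on types -/

/-- The relation `⋖` on unit types: `U₁ ⋖ U₂` iff either `U₂ ≡ ∀X.U₁`, or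
`U₁ ≡ ∀X.U'` and `U₂ ≡ U'[V/X]`. -/
inductive SSub : UTy → UTy → Prop
  | gen {U₁ U₂ : UTy} (X : ℕ) : UEq U₂ (UTy.genAll X U₁) → SSub U₁ U₂
  | inst {U₁ U₂ : UTy} (U' V : UTy) : UEq U₁ (.all U') → UEq U₂ (UTy.subst 0 V U') →
      SSub U₁ U₂

/-- The relation `≼`: the reflexive (with respect to `≡`) and transitive
closure of `⋖`, on types. -/
inductive TPre : Ty → Ty → Prop
  | ofEq : TEq T T' → TPre T T'
  | ofSSub {U V : UTy} : SSub U V → TPre (.unit U) (.unit V)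
  | trans : TPre T T' → TPre T' T'' → TPre T T''

/-! ## Trees and the structured type system Add_struct -/

/-- Binary trees with two kinds of leaves: `ℓ`-leaves and `𝟘`-leaves. -/
inductive ATree : Type
  | leaf : ATree
  | zleaf : ATree
  | node : ATree → ATree → ATree
  deriving DecidableEq

namespace ATree

/-- ATree composition: branch a copy of `A'` at each `ℓ`-leaf of `A`. -/
def comp : ATree → ATree → ATree
  | .leaf, A' => A'
  | .zleaf, _ => .zleaf
  | .node A B, A' => .node (comp A A') (comp B A')

/-- `LeafAt A w`: the word `w` (over `{l,r}`, here `{false,true}`) is the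
address of an `ℓ`-leaf of `A`. -/
inductive LeafAt : ATree → List Bool → Prop
  | leaf : LeafAt .leaf []
  | left {A B w} : LeafAt A w → LeafAt (.node A B) (false :: w)
  | right {A B w} : LeafAt B w → LeafAt (.node A B) (true :: w)

/-- Labelling of the `ℓ`-leaves of a tree by unit types, yielding a type. -/
def labelU : ATree → (List Bool → UTy) → Ty
  | .leaf, f => .unit (f [])
  | .zleaf, _ => .zero
  | .node A B, f => .add (labelU A fun w => f (false :: w)) (labelU B fun w => f (true :: w))

/-- Labelling of the `ℓ`-leaves of a tree by types, yielding a type. -/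
def labelT : ATree → (List Bool → Ty) → Ty
  | .leaf, f => f []
  | .zleaf, _ => .zero
  | .node A B, f => .add (labelT A fun w => f (false :: w)) (labelT B fun w => f (true :: w))

/-- Split an address of a leaf of `A ∘ A'` into the `A`-part and the `A'`-part. -/
def split : ATree → List Bool → List Bool × List Bool
  | .leaf, p => ([], p)
  | .zleaf, p => ([], p)
  | .node A _, false :: p => ((split A p).1.cons false, (split A p).2)
  | .node _ B, true :: p => ((split B p).1.cons true, (split B p).2)
  | .node _ _, [] => ([], [])

end ATree

/-- Typing derivations of the structured type system Add_struct. -/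
inductive SDeriv : List UTy → Tm → Ty → Type
  | ax (Γ : List UTy) (n : ℕ) (U : UTy) (h : Γ[n]? = some U) : SDeriv Γ (.var n) (.unit U)
  | axZero (Γ : List UTy) : SDeriv Γ .zero .zero
  | arrI {Γ U t T} (D : SDeriv (U :: Γ) t T) : SDeriv Γ (.lam t) (.unit (.arrow U T))
  | addI {Γ t u T R} (D₁ : SDeriv Γ t T) (D₂ : SDeriv Γ u R) :
      SDeriv Γ (.add t u) (.add T R)
  | allE {Γ t U} (V : UTy) (D : SDeriv Γ t (.unit (.all U))) :
      SDeriv Γ t (.unit (UTy.subst 0 V U))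
  | allI {Γ t U} (D : SDeriv (liftCtx Γ) t (.unit U)) : SDeriv Γ t (.unit (.all U))
  | arrE {Γ t u} (A A' : ATree) (k : ℕ) (U : UTy) (Tf : List Bool → Ty)
      (Vf : List Bool → List UTy)
      (hlen : ∀ v, A'.LeafAt v → (Vf v).length = k)
      (D₁ : SDeriv Γ t (A.labelU fun w => allN k (.arrow U (Tf w))))
      (D₂ : SDeriv Γ u (A'.labelU fun v => UTy.msubst (Vf v) U)) :
      SDeriv Γ (.app t u)
        ((A.comp A').labelT fun p => Ty.msubst (Vf (A.split p).2) (Tf (A.split p).1))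

/-! ## System F with pairs -/

/-- Terms of System F with pairs. -/
inductive FTm : Type
  | var : ℕ → FTm
  | lam : FTm → FTm
  | app : FTm → FTm → FTm
  | star : FTm
  | pair : FTm → FTm → FTm
  | pl : FTm → FTm
  | pr : FTm → FTm
  deriving DecidableEq

/-- Types of System F with pairs. -/
inductive FTy : Type
  | var : ℕ → FTy
  | arrow : FTy → FTy → FTy
  | all : FTy → FTy
  | one : FTy
  | prod : FTy → FTy → FTy
  deriving DecidableEq

/-- Shifting of term variables in F-terms. -/
def FTm.shift (d c : ℕ) : FTm → FTm
  | .var n => if n < c then .var n else .var (n + d)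
  | .lam t => .lam (FTm.shift d (c + 1) t)
  | .app t u => .app (FTm.shift d c t) (FTm.shift d c u)
  | .star => .star
  | .pair t u => .pair (FTm.shift d c t) (FTm.shift d c u)
  | .pl t => .pl (FTm.shift d c t)
  | .pr t => .pr (FTm.shift d c t)

/-- Substitution of the term variable `k` by `v` in an F-term. -/
def FTm.subst (k : ℕ) (v : FTm) : FTm → FTm
  | .var n => if n = k then FTm.shift k 0 v else if k < n then .var (n - 1) else .var n
  | .lam t => .lam (FTm.subst (k + 1) v t)
  | .app t u => .app (FTm.subst k v t) (FTm.subst k v u)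
  | .star => .star
  | .pair t u => .pair (FTm.subst k v t) (FTm.subst k v u)
  | .pl t => .pl (FTm.subst k v t)
  | .pr t => .pr (FTm.subst k v t)

/-- Shifting of type variables in F-types. -/
def FTy.shift (d c : ℕ) : FTy → FTy
  | .var n => if n < c then .var n else .var (n + d)
  | .arrow A B => .arrow (FTy.shift d c A) (FTy.shift d c B)
  | .all A => .all (FTy.shift d (c + 1) A)
  | .one => .one
  | .prod A B => .prod (FTy.shift d c A) (FTy.shift d c B)

/-- Substitution of the type variable `k` by `B` in an F-type. -/
def FTy.subst (k : ℕ) (B : FTy) : FTy → FTy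
  | .var n => if n = k then FTy.shift k 0 B else if k < n then .var (n - 1) else .var n
  | .arrow A A' => .arrow (FTy.subst k B A) (FTy.subst k B A')
  | .all A => .all (FTy.subst (k + 1) B A)
  | .one => .one
  | .prod A A' => .prod (FTy.subst k B A) (FTy.subst k B A')

/-- One-step reduction in System F with pairs. -/
inductive FStep : FTm → FTm → Prop
  | beta (t u : FTm) : FStep (.app (.lam t) u) (FTm.subst 0 u t)
  | plPair (t u : FTm) : FStep (.pl (.pair t u)) t
  | prPair (t u : FTm) : FStep (.pr (.pair t u)) u
  | eta (t : FTm) : FStep (.lam (.app (FTm.shift 1 0 t) (.var 0))) t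
  | sp (p : FTm) : FStep (.pair (.pl p) (.pr p)) p
  | lamCongr : FStep t t' → FStep (.lam t) (.lam t')
  | appLeft : FStep t t' → FStep (.app t u) (.app t' u)
  | appRight : FStep u u' → FStep (.app t u) (.app t u')
  | pairLeft : FStep t t' → FStep (.pair t u) (.pair t' u)
  | pairRight : FStep u u' → FStep (.pair t u) (.pair t u')
  | plCongr : FStep t t' → FStep (.pl t) (.pl t')
  | prCongr : FStep t t' → FStep (.pr t) (.pr t')

/-- Typing in System F with pairs. -/
inductive FTyping : List FTy → FTm → FTy → Prop
  | ax {Γ n A} : Γ[n]? = some A → FTyping Γ (.var n) A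
  | star {Γ} : FTyping Γ .star .one
  | lam {Γ A t B} : FTyping (A :: Γ) t B → FTyping Γ (.lam t) (.arrow A B)
  | app {Γ t u A B} : FTyping Γ t (.arrow A B) → FTyping Γ u A → FTyping Γ (.app t u) B
  | pair {Γ t u A B} : FTyping Γ t A → FTyping Γ u B → FTyping Γ (.pair t u) (.prod A B)
  | pl {Γ t A B} : FTyping Γ t (.prod A B) → FTyping Γ (.pl t) A
  | pr {Γ t A B} : FTyping Γ t (.prod A B) → FTyping Γ (.pr t) B
  | allI {Γ t A} : FTyping (Γ.map (FTy.shift 1 0)) t A → FTyping Γ t (.all A)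
  | allE {Γ t A} (B : FTy) : FTyping Γ t (.all A) → FTyping Γ t (FTy.subst 0 B A)

/-! ## The translation from Add_struct into System F with pairs -/

mutual
  /-- Translation of unit types into F-types. -/
  def transU : UTy → FTy
    | .var n => .var n
    | .arrow U T => .arrow (transU U) (transT T)
    | .all U => .all (transU U)

  /-- Translation of Add types into F-types. -/
  def transT : Ty → FTy
    | .unit U => transU U
    | .add T R => .prod (transT T) (transT R)
    | .zero => .one
end

/-- Labelling of the `ℓ`-leaves of a tree by F-terms (pairs at the nodes, `⋆`
at the `𝟘`-leaves), yielding an F-term. -/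
def ATree.labelF : ATree → (List Bool → FTm) → FTm
  | .leaf, f => f []
  | .zleaf, _ => .star
  | .node A B, f => .pair (ATree.labelF A fun w => f (false :: w))
      (ATree.labelF B fun w => f (true :: w))

/-- `π_{w̄}(t)`: the composite of projections along the mirror of the word `w`. -/
def projMirror (w : List Bool) (t : FTm) : FTm :=
  w.foldl (fun s b => if b then .pr s else .pl s) t

/-- The translation `|t|_D` of a term typed in Add_struct by a derivation `D`
into an F-term. -/
def transD : ∀ {Γ : List UTy} {t : Tm} {T : Ty}, SDeriv Γ t T → FTm
  | _, _, _, .ax _ n _ _ => .var n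
  | _, _, _, .axZero _ => .star
  | _, _, _, .arrI D => .lam (transD D)
  | _, _, _, .addI D₁ D₂ => .pair (transD D₁) (transD D₂)
  | _, _, _, .allE _ D => transD D
  | _, _, _, .allI D => transD D
  | _, _, _, .arrE A A' _ _ _ _ _ D₁ D₂ =>
      (A.comp A').labelF fun p =>
        .app (projMirror (A.split p).1 (transD D₁)) (projMirror (A.split p).2 (transD D₂))

/-! ## Structural reduction (without AC and without the rule `t+𝟎 → t`) -/

/-- One-step reduction by a rule other than `t+𝟎 → t` (and not using the
AC-equivalence, which is absent from Add_struct). -/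
inductive SStep : Tm → Tm → Prop
  | distrRight (t u s : Tm) : SStep (.app (.add t u) s) (.add (.app t s) (.app u s))
  | distrLeft (t u s : Tm) : SStep (.app t (.add u s)) (.add (.app t u) (.app t s))
  | zeroApp (t : Tm) : SStep (.app .zero t) .zero
  | appZero (t : Tm) : SStep (.app t .zero) .zero
  | beta (t v : Tm) : IsValue v → SStep (.app (.lam t) v) (Tm.subst 0 v t)
  | appLeft : SStep t t' → SStep (.app t u) (.app t' u)
  | appRight : SStep u u' → SStep (.app t u) (.app t u')
  | addLeft : SStep t t' → SStep (.add t u) (.add t' u)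
  | addRight : SStep u u' → SStep (.add t u) (.add t u')
  | lamCongr : SStep t t' → SStep (.lam t) (.lam t')

/-! ## The partial inverse translation -/

/-- Partial inverse translation on types. -/
def invTy : FTy → Option Ty
  | .var n => some (.unit (.var n))
  | .one => some .zero
  | .all A =>
    match invTy A with
    | some (.unit U) => some (.unit (.all U))
    | _ => none
  | .prod A B =>
    match invTy A, invTy B with
    | some T, some R => some (.add T R)
    | _, _ => none
  | .arrow A B =>
    match invTy A, invTy B with
    | some (.unit U), some T => some (.unit (.arrow U T))
    | _, _ => none

/-- An F-term of the shape `A[wv ↦ π_{w̄}(t) π_{v̄}(u)]` for a non-trivial tree. -/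
def IsTreeApp (s : FTm) : Prop :=
  ∃ (A A' : ATree) (t u : FTm), A.comp A' ≠ .leaf ∧ A.comp A' ≠ .zleaf ∧
    s = (A.comp A').labelF fun p =>
      .app (projMirror (A.split p).1 t) (projMirror (A.split p).2 u)

/-- The partial inverse translation on F-terms, as a relation. -/
inductive InvTm : FTm → Tm → Prop
  | var (n : ℕ) : InvTm (.var n) (.var n)
  | star : InvTm .star .zero
  | lam : InvTm t t' → InvTm (.lam t) (.lam t')
  | app : InvTm t t' → InvTm u u' → InvTm (.app t u) (.app t' u')
  | treeApp (A A' : ATree) {t u : FTm} {t' u' : Tm} :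
      A.comp A' ≠ .leaf → A.comp A' ≠ .zleaf → InvTm t t' → InvTm u u' →
      InvTm ((A.comp A').labelF fun p =>
          .app (projMirror (A.split p).1 t) (projMirror (A.split p).2 u))
        (.app t' u')
  | pair : ¬ IsTreeApp (.pair t u) → InvTm t t' → InvTm u u' →
      InvTm (.pair t u) (.add t' u')


/-! ### Auxiliary development for the arrow comparison lemma -/

/-- Lifting of a parallel type substitution under a binder. -/
def liftS (σ : ℕ → UTy) : ℕ → UTy
  | 0 => .var 0
  | n + 1 => UTy.shift 1 0 (σ n)

mutual
  /-- Parallel substitution on unit types. -/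
  def UTy.psub (σ : ℕ → UTy) : UTy → UTy
    | .var n => σ n
    | .arrow U T => .arrow (UTy.psub σ U) (Ty.psub σ T)
    | .all U => .all (UTy.psub (liftS σ) U)
  /-- Parallel substitution on types. -/
  def Ty.psub (σ : ℕ → UTy) : Ty → Ty
    | .unit U => .unit (UTy.psub σ U)
    | .add T R => .add (Ty.psub σ T) (Ty.psub σ R)
    | .zero => .zero
end

def renS (ρ : ℕ → ℕ) : ℕ → UTy := fun n => .var (ρ n)

def liftR (ρ : ℕ → ℕ) : ℕ → ℕ
  | 0 => 0
  | n + 1 => ρ n + 1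

def shR (d c : ℕ) : ℕ → ℕ := fun n => if n < c then n else n + d

theorem liftS_renS (ρ : ℕ → ℕ) : liftS (renS ρ) = renS (liftR ρ) := by
  funext n; cases n <;> simp [liftS, renS, liftR, UTy.shift]

theorem liftR_shR (d c : ℕ) : liftR (shR d c) = shR d (c + 1) := by
  funext n
  cases n with
  | zero => simp [liftR, shR]
  | succ n => simp only [liftR, shR]; split_ifs <;> omega

mutual
theorem UTy.shift_eq_psub : ∀ (A : UTy) (d c : ℕ),
    UTy.shift d c A = UTy.psub (renS (shR d c)) A
  | .var n, d, c => by
      simp only [UTy.shift, UTy.psub, renS, shR]; split_ifs <;> rfl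
  | .arrow U T, d, c => by
      simp only [UTy.shift, UTy.psub, UTy.shift_eq_psub U d c, Ty.shift_eq_psub T d c]
  | .all U, d, c => by
      simp only [UTy.shift, UTy.psub, UTy.shift_eq_psub U d (c + 1), liftS_renS, liftR_shR]
theorem Ty.shift_eq_psub : ∀ (A : Ty) (d c : ℕ),
    Ty.shift d c A = Ty.psub (renS (shR d c)) A
  | .unit U, d, c => by simp only [Ty.shift, Ty.psub, UTy.shift_eq_psub U d c]
  | .add T R, d, c => by
      simp only [Ty.shift, Ty.psub, Ty.shift_eq_psub T d c, Ty.shift_eq_psub R d c]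
  | .zero, _, _ => rfl
end

mutual
theorem UTy.psub_ren : ∀ (A : UTy) (σ : ℕ → UTy) (ρ : ℕ → ℕ),
    UTy.psub σ (UTy.psub (renS ρ) A) = UTy.psub (fun n => σ (ρ n)) A
  | .var _, _, _ => rfl
  | .arrow U T, σ, ρ => by simp only [UTy.psub, UTy.psub_ren U, Ty.psub_ren T]
  | .all U, σ, ρ => by
      have h : liftS (fun n => σ (ρ n)) = fun n => liftS σ (liftR ρ n) := by
        funext n; cases n <;> rfl
      simp only [UTy.psub, liftS_renS, UTy.psub_ren U (liftS σ) (liftR ρ), h]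
theorem Ty.psub_ren : ∀ (A : Ty) (σ : ℕ → UTy) (ρ : ℕ → ℕ),
    Ty.psub σ (Ty.psub (renS ρ) A) = Ty.psub (fun n => σ (ρ n)) A
  | .unit U, σ, ρ => by simp only [Ty.psub, UTy.psub_ren U]
  | .add T R, σ, ρ => by simp only [Ty.psub, Ty.psub_ren T, Ty.psub_ren R]
  | .zero, _, _ => rfl
end

mutual
theorem UTy.ren_psub : ∀ (A : UTy) (σ : ℕ → UTy) (ρ : ℕ → ℕ),
    UTy.psub (renS ρ) (UTy.psub σ A) = UTy.psub (fun n => UTy.psub (renS ρ) (σ n)) A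
  | .var _, _, _ => rfl
  | .arrow U T, σ, ρ => by simp only [UTy.psub, UTy.ren_psub U, Ty.ren_psub T]
  | .all U, σ, ρ => by
      have h : liftS (fun n => UTy.psub (renS ρ) (σ n))
          = fun n => UTy.psub (renS (liftR ρ)) (liftS σ n) := by
        funext n
        cases n with
        | zero => rfl
        | succ n =>
          show UTy.shift 1 0 (UTy.psub (renS ρ) (σ n))
              = UTy.psub (renS (liftR ρ)) (UTy.shift 1 0 (σ n))
          rw [UTy.shift_eq_psub (UTy.psub (renS ρ) (σ n)) 1 0,
              UTy.shift_eq_psub (σ n) 1 0, UTy.psub_ren, UTy.psub_ren]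
          rfl
      simp only [UTy.psub, liftS_renS, UTy.ren_psub U, h]
theorem Ty.ren_psub : ∀ (A : Ty) (σ : ℕ → UTy) (ρ : ℕ → ℕ),
    Ty.psub (renS ρ) (Ty.psub σ A) = Ty.psub (fun n => UTy.psub (renS ρ) (σ n)) A
  | .unit U, σ, ρ => by simp only [Ty.psub, UTy.ren_psub U]
  | .add T R, σ, ρ => by simp only [Ty.psub, Ty.ren_psub T, Ty.ren_psub R]
  | .zero, _, _ => rfl
end

mutual
theorem UTy.psub_psub : ∀ (A : UTy) (σ τ : ℕ → UTy),
    UTy.psub σ (UTy.psub τ A) = UTy.psub (fun n => UTy.psub σ (τ n)) A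
  | .var _, _, _ => rfl
  | .arrow U T, σ, τ => by simp only [UTy.psub, UTy.psub_psub U, Ty.psub_psub T]
  | .all U, σ, τ => by
      have h : liftS (fun n => UTy.psub σ (τ n))
          = fun n => UTy.psub (liftS σ) (liftS τ n) := by
        funext n
        cases n with
        | zero => rfl
        | succ n =>
          show UTy.shift 1 0 (UTy.psub σ (τ n)) = UTy.psub (liftS σ) (UTy.shift 1 0 (τ n))
          rw [UTy.shift_eq_psub (UTy.psub σ (τ n)) 1 0, UTy.shift_eq_psub (τ n) 1 0,
              UTy.ren_psub, UTy.psub_ren]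
          congr 1
          funext m
          show UTy.psub (renS (shR 1 0)) (σ m) = liftS σ (shR 1 0 m)
          have hm : shR 1 0 m = m + 1 := by simp [shR]
          rw [hm, ← UTy.shift_eq_psub]
          rfl
      simp only [UTy.psub, UTy.psub_psub U, h]
theorem Ty.psub_psub : ∀ (A : Ty) (σ τ : ℕ → UTy),
    Ty.psub σ (Ty.psub τ A) = Ty.psub (fun n => UTy.psub σ (τ n)) A
  | .unit U, σ, τ => by simp only [Ty.psub, UTy.psub_psub U]
  | .add T R, σ, τ => by simp only [Ty.psub, Ty.psub_psub T, Ty.psub_psub R]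
  | .zero, _, _ => rfl
end

theorem liftS_id : liftS (fun n => UTy.var n) = fun n => UTy.var n := by
  funext n; cases n <;> simp [liftS, UTy.shift]

mutual
theorem UTy.psub_id : ∀ A : UTy, UTy.psub (fun n => .var n) A = A
  | .var _ => rfl
  | .arrow U T => by simp only [UTy.psub, UTy.psub_id U, Ty.psub_id T]
  | .all U => by simp only [UTy.psub, liftS_id, UTy.psub_id U]
theorem Ty.psub_id : ∀ A : Ty, Ty.psub (fun n => .var n) A = A
  | .unit U => by simp only [Ty.psub, UTy.psub_id U]
  | .add T R => by simp only [Ty.psub, Ty.psub_id T, Ty.psub_id R]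
  | .zero => rfl
end

mutual
  /-- Strict bound on the free variables of a unit type. -/
  def UTy.fvb : UTy → ℕ
    | .var n => n + 1
    | .arrow U T => max (UTy.fvb U) (Ty.fvb T)
    | .all U => UTy.fvb U - 1
  /-- Strict bound on the free variables of a type. -/
  def Ty.fvb : Ty → ℕ
    | .unit U => UTy.fvb U
    | .add T R => max (Ty.fvb T) (Ty.fvb R)
    | .zero => 0
end

mutual
theorem UTy.psub_ext : ∀ (A : UTy) (σ τ : ℕ → UTy),
    (∀ n < UTy.fvb A, σ n = τ n) → UTy.psub σ A = UTy.psub τ A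
  | .var n, σ, τ, h => h n (by simp [UTy.fvb])
  | .arrow U T, σ, τ, h => by
      simp only [UTy.psub]
      rw [UTy.psub_ext U σ τ fun n hn => h n (by simp only [UTy.fvb]; omega),
          Ty.psub_ext T σ τ fun n hn => h n (by simp only [UTy.fvb]; omega)]
  | .all U, σ, τ, h => by
      have h' : ∀ n < UTy.fvb U, liftS σ n = liftS τ n := by
        intro n hn
        match n with
        | 0 => rfl
        | m + 1 =>
          have hm : σ m = τ m := h m (by simp only [UTy.fvb]; omega)
          simp [liftS, hm]
      simp only [UTy.psub, UTy.psub_ext U _ _ h']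
theorem Ty.psub_ext : ∀ (A : Ty) (σ τ : ℕ → UTy),
    (∀ n < Ty.fvb A, σ n = τ n) → Ty.psub σ A = Ty.psub τ A
  | .unit U, σ, τ, h => by simp only [Ty.psub, UTy.psub_ext U σ τ h]
  | .add T R, σ, τ, h => by
      simp only [Ty.psub]
      rw [Ty.psub_ext T σ τ fun n hn => h n (by simp only [Ty.fvb]; omega),
          Ty.psub_ext R σ τ fun n hn => h n (by simp only [Ty.fvb]; omega)]
  | .zero, _, _, _ => rfl
end

theorem UTy.shift_shift (V : UTy) (k : ℕ) :
    UTy.shift 1 0 (UTy.shift k 0 V) = UTy.shift (k + 1) 0 V := by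
  rw [UTy.shift_eq_psub (UTy.shift k 0 V) 1 0, UTy.shift_eq_psub V k 0,
      UTy.psub_ren, UTy.shift_eq_psub V (k + 1) 0]
  rfl

theorem UTy.shift_zero (A : UTy) : UTy.shift 0 0 A = A := by
  rw [UTy.shift_eq_psub]
  rw [UTy.psub_ext A _ (fun n => .var n) (fun n _ => by simp [renS, shR]), UTy.psub_id]

def substS (k : ℕ) (V : UTy) : ℕ → UTy := fun n =>
  if n = k then UTy.shift k 0 V else if k < n then .var (n - 1) else .var n

def absS (X c : ℕ) : ℕ → UTy := fun n =>
  if n = X + c then .var c else if c ≤ n then .var (n + 1) else .var n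

def replS (X : ℕ) (V : UTy) (c : ℕ) : ℕ → UTy := fun n =>
  if n = X + c then UTy.shift c 0 V else .var n

theorem liftS_substS (k : ℕ) (V : UTy) : liftS (substS k V) = substS (k + 1) V := by
  funext n
  cases n with
  | zero => simp [liftS, substS]
  | succ n =>
    show UTy.shift 1 0 (substS k V n) = substS (k + 1) V (n + 1)
    by_cases h1 : n = k
    · subst h1; simp [substS, UTy.shift_shift]
    · by_cases h2 : k < n
      · simp only [substS, if_neg h1, if_pos h2,
          if_neg (by omega : ¬ n + 1 = k + 1), if_pos (by omega : k + 1 < n + 1)]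
        simp only [UTy.shift, Nat.not_lt_zero, if_false]
        congr 1; omega
      · simp only [substS, if_neg h1, if_neg h2,
          if_neg (by omega : ¬ n + 1 = k + 1), if_neg (by omega : ¬ k + 1 < n + 1)]
        simp [UTy.shift]

theorem liftS_absS (X c : ℕ) : liftS (absS X c) = absS X (c + 1) := by
  funext n
  cases n with
  | zero =>
    show UTy.var 0 = absS X (c + 1) 0
    simp only [absS]
    rw [if_neg (by omega), if_neg (by omega)]
  | succ n =>
    show UTy.shift 1 0 (absS X c n) = absS X (c + 1) (n + 1)
    by_cases h1 : n = X + c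
    · simp only [absS, if_pos h1, if_pos (by omega : n + 1 = X + (c + 1))]
      simp [UTy.shift]
    · by_cases h2 : c ≤ n
      · simp only [absS, if_neg h1, if_pos h2,
          if_neg (by omega : ¬ n + 1 = X + (c + 1)), if_pos (by omega : c + 1 ≤ n + 1)]
        simp [UTy.shift]
      · simp only [absS, if_neg h1, if_neg h2,
          if_neg (by omega : ¬ n + 1 = X + (c + 1)), if_neg (by omega : ¬ c + 1 ≤ n + 1)]
        simp [UTy.shift]

theorem liftS_replS (X : ℕ) (V : UTy) (c : ℕ) :
    liftS (replS X V c) = replS X V (c + 1) := by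
  funext n
  cases n with
  | zero =>
    show UTy.var 0 = replS X V (c + 1) 0
    simp only [replS]
    rw [if_neg (by omega)]
  | succ n =>
    show UTy.shift 1 0 (replS X V c n) = replS X V (c + 1) (n + 1)
    by_cases h1 : n = X + c
    · simp only [replS, if_pos h1, if_pos (by omega : n + 1 = X + (c + 1))]
      exact UTy.shift_shift V c
    · simp only [replS, if_neg h1, if_neg (by omega : ¬ n + 1 = X + (c + 1))]
      simp [UTy.shift]

mutual
theorem UTy.subst_eq_psub : ∀ (A : UTy) (k : ℕ) (V : UTy),
    UTy.subst k V A = UTy.psub (substS k V) A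
  | .var n, k, V => rfl
  | .arrow U T, k, V => by
      simp only [UTy.subst, UTy.psub, UTy.subst_eq_psub U, Ty.subst_eq_psub T]
  | .all U, k, V => by
      simp only [UTy.subst, UTy.psub, UTy.subst_eq_psub U (k + 1) V, liftS_substS]
theorem Ty.subst_eq_psub : ∀ (A : Ty) (k : ℕ) (V : UTy),
    Ty.subst k V A = Ty.psub (substS k V) A
  | .unit U, k, V => by simp only [Ty.subst, Ty.psub, UTy.subst_eq_psub U]
  | .add T R, k, V => by
      simp only [Ty.subst, Ty.psub, Ty.subst_eq_psub T, Ty.subst_eq_psub R]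
  | .zero, _, _ => rfl
end

mutual
theorem UTy.absAux_eq_psub : ∀ (A : UTy) (X c : ℕ),
    UTy.absAux X c A = UTy.psub (absS X c) A
  | .var n, X, c => rfl
  | .arrow U T, X, c => by
      simp only [UTy.absAux, UTy.psub, UTy.absAux_eq_psub U, Ty.absAux_eq_psub T]
  | .all U, X, c => by
      simp only [UTy.absAux, UTy.psub, UTy.absAux_eq_psub U X (c + 1), liftS_absS]
theorem Ty.absAux_eq_psub : ∀ (A : Ty) (X c : ℕ),
    Ty.absAux X c A = Ty.psub (absS X c) A
  | .unit U, X, c => by simp only [Ty.absAux, Ty.psub, UTy.absAux_eq_psub U]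
  | .add T R, X, c => by
      simp only [Ty.absAux, Ty.psub, Ty.absAux_eq_psub T, Ty.absAux_eq_psub R]
  | .zero, _, _ => rfl
end

mutual
theorem UTy.replAux_eq_psub : ∀ (A : UTy) (X : ℕ) (V : UTy) (c : ℕ),
    UTy.replAux X V c A = UTy.psub (replS X V c) A
  | .var n, X, V, c => rfl
  | .arrow U T, X, V, c => by
      simp only [UTy.replAux, UTy.psub, UTy.replAux_eq_psub U, Ty.replAux_eq_psub T]
  | .all U, X, V, c => by
      simp only [UTy.replAux, UTy.psub, UTy.replAux_eq_psub U X V (c + 1), liftS_replS]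
theorem Ty.replAux_eq_psub : ∀ (A : Ty) (X : ℕ) (V : UTy) (c : ℕ),
    Ty.replAux X V c A = Ty.psub (replS X V c) A
  | .unit U, X, V, c => by simp only [Ty.replAux, Ty.psub, UTy.replAux_eq_psub U]
  | .add T R, X, V, c => by
      simp only [Ty.replAux, Ty.psub, Ty.replAux_eq_psub T, Ty.replAux_eq_psub R]
  | .zero, _, _, _ => rfl
end

theorem UTy.repl_eq_psub (X : ℕ) (V : UTy) (B : UTy) :
    UTy.repl X V B = UTy.psub (replS X V 0) B := by
  rw [UTy.repl, UTy.replAux_eq_psub]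

theorem UTy.repl_fresh {X : ℕ} {V B : UTy} (h : UTy.fvb B ≤ X) :
    UTy.repl X V B = B := by
  rw [UTy.repl_eq_psub]
  rw [UTy.psub_ext B _ (fun n => .var n) ?_, UTy.psub_id]
  intro n hn
  simp only [replS]
  rw [if_neg (by omega)]

theorem UEq.psubC {A B : UTy} (h : UEq A B) : ∀ σ, UEq (UTy.psub σ A) (UTy.psub σ B) :=
  UEq.rec (motive_1 := fun A B _ => ∀ σ, UEq (UTy.psub σ A) (UTy.psub σ B))
    (motive_2 := fun T R _ => ∀ σ, TEq (Ty.psub σ T) (Ty.psub σ R))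
    (fun _ _ => .refl _)
    (fun _ ih σ => .symm (ih σ))
    (fun _ _ ih1 ih2 σ => .trans (ih1 σ) (ih2 σ))
    (fun _ _ ih1 ih2 σ => UEq.arrow (ih1 σ) (ih2 σ))
    (fun _ ih σ => UEq.all (ih (liftS σ)))
    (fun _ _ => .refl _)
    (fun _ ih σ => .symm (ih σ))
    (fun _ _ ih1 ih2 σ => .trans (ih1 σ) (ih2 σ))
    (fun _ ih σ => TEq.unit (ih σ))
    (fun _ _ ih1 ih2 σ => TEq.addCongr (ih1 σ) (ih2 σ))
    (fun _ _ _ => TEq.comm _ _)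
    (fun _ _ _ _ => TEq.assoc _ _ _)
    (fun _ _ => TEq.zero _)
    h

/-- Head constructor of a unit type. -/
def UTy.hd : UTy → ℕ
  | .var _ => 0
  | .arrow _ _ => 1
  | .all _ => 2

theorem UEq.hd_eq {A B : UTy} (h : UEq A B) : UTy.hd A = UTy.hd B :=
  UEq.rec (motive_1 := fun A B _ => UTy.hd A = UTy.hd B)
    (motive_2 := fun _ _ _ => True)
    (fun _ => rfl)
    (fun _ ih => ih.symm)
    (fun _ _ ih1 ih2 => ih1.trans ih2)
    (fun _ _ _ _ => rfl)
    (fun _ _ => rfl)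
    (fun _ => trivial)
    (fun _ _ => trivial)
    (fun _ _ _ _ => trivial)
    (fun _ _ => trivial)
    (fun _ _ _ _ => trivial)
    (fun _ _ => trivial)
    (fun _ _ _ => trivial)
    (fun _ => trivial)
    h

/-- Peel an outer quantifier. -/
def UTy.peel : UTy → UTy
  | .all A => A
  | A => A

theorem UEq.peel_congr {A B : UTy} (h : UEq A B) : UEq (UTy.peel A) (UTy.peel B) :=
  UEq.rec (motive_1 := fun A B _ => UEq (UTy.peel A) (UTy.peel B))
    (motive_2 := fun _ _ _ => True)
    (fun _ => .refl _)
    (fun _ ih => .symm ih)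
    (fun _ _ ih1 ih2 => .trans ih1 ih2)
    (fun h1 h2 _ _ => UEq.arrow h1 h2)
    (fun h1 _ => h1)
    (fun _ => trivial)
    (fun _ _ => trivial)
    (fun _ _ _ _ => trivial)
    (fun _ _ => trivial)
    (fun _ _ _ _ => trivial)
    (fun _ _ => trivial)
    (fun _ _ _ => trivial)
    (fun _ => trivial)
    h

/-- Multiset of the unit components of a type. -/
def Ty.units : Ty → Multiset UTy
  | .unit U => {U}
  | .add T R => Ty.units T + Ty.units R
  | .zero => 0

instance : IsTrans UTy UEq := ⟨fun _ _ _ => UEq.trans⟩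

theorem TEq.units_rel {T R : Ty} (h : TEq T R) :
    Multiset.Rel UEq (Ty.units T) (Ty.units R) :=
  TEq.rec (motive_1 := fun _ _ _ => True)
    (motive_2 := fun T R _ => Multiset.Rel UEq (Ty.units T) (Ty.units R))
    (fun _ => trivial)
    (fun _ _ => trivial)
    (fun _ _ _ _ => trivial)
    (fun _ _ _ _ => trivial)
    (fun _ _ => trivial)
    (fun _ => Multiset.rel_refl_of_refl_on fun x _ => UEq.refl x)
    (fun _ ih => Multiset.rel_flip.mp (ih.mono fun a _ b _ hab => UEq.symm hab))
    (fun _ _ ih1 ih2 => Multiset.Rel.trans UEq ih1 ih2)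
    (fun hu _ => by simpa [Ty.units] using Multiset.Rel.cons hu Multiset.Rel.zero)
    (fun _ _ ih1 ih2 => Multiset.Rel.add ih1 ih2)
    (fun T R => by
      simp only [Ty.units]
      rw [add_comm]
      exact Multiset.rel_refl_of_refl_on fun x _ => UEq.refl x)
    (fun T R S => by
      simp only [Ty.units]
      rw [add_assoc]
      exact Multiset.rel_refl_of_refl_on fun x _ => UEq.refl x)
    (fun T => by
      simp only [Ty.units, add_zero]
      exact Multiset.rel_refl_of_refl_on fun x _ => UEq.refl x)
    h

theorem TEq.unit_inv {U V : UTy} (h : TEq (.unit U) (.unit V)) : UEq U V := by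
  have h1 := h.units_rel
  simp only [Ty.units] at h1
  rw [← Multiset.cons_zero U] at h1
  obtain ⟨b, bs, hb, h0, hV⟩ := Multiset.rel_cons_left.mp h1
  rw [Multiset.rel_zero_left] at h0
  subst h0
  rw [Multiset.cons_zero] at hV
  obtain rfl := Multiset.singleton_inj.mp hV
  exact hb

theorem allN_succ (k : ℕ) (U : UTy) : allN (k + 1) U = .all (allN k U) := rfl

theorem absAux_allN : ∀ (k X c : ℕ) (U : UTy),
    UTy.absAux X c (allN k U) = allN k (UTy.absAux X (c + k) U) := by
  intro k
  induction k with
  | zero => intro X c U; rfl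
  | succ k ih =>
    intro X c U
    show UTy.absAux X c (.all (allN k U)) = _
    simp only [UTy.absAux]
    rw [ih X (c + 1) U]
    have hc : c + 1 + k = c + (k + 1) := by omega
    rw [hc]
    rfl

theorem subst_allN : ∀ (k c : ℕ) (V : UTy) (U : UTy),
    UTy.subst c V (allN k U) = allN k (UTy.subst (c + k) V U) := by
  intro k
  induction k with
  | zero => intro c V U; rfl
  | succ k ih =>
    intro c V U
    show UTy.subst c V (.all (allN k U)) = _
    simp only [UTy.subst]
    rw [ih (c + 1) V U]
    have hc : c + 1 + k = c + (k + 1) := by omega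
    rw [hc]
    rfl

theorem mem_le_foldr_max : ∀ (l : List ℕ), ∀ x ∈ l, x ≤ l.foldr max 0 := by
  intro l
  induction l with
  | nil => simp
  | cons a l ih =>
    intro x hx
    rcases List.mem_cons.mp hx with h | h
    · subst h; simp [List.foldr]
    · simp only [List.foldr]
      exact le_trans (ih x h) (le_max_right _ _)

theorem foldl_repl_unit : ∀ (l : List (ℕ × UTy)) (U0 : UTy),
    List.foldl (fun A p => Ty.repl p.1 p.2 A) (.unit U0) l
      = .unit (List.foldl (fun B p => UTy.repl p.1 p.2 B) U0 l) := by
  intro l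
  induction l with
  | nil => intro U0; rfl
  | cons p l ih =>
    intro U0
    simp only [List.foldl_cons]
    rw [show Ty.repl p.1 p.2 (.unit U0) = Ty.unit (UTy.repl p.1 p.2 U0) from rfl, ih]

/-- Any parallel substitution can be realised on a given unit type by a finite
sequence of single-variable substitutions. -/
theorem realize_psub (σ : ℕ → UTy) (A : UTy) :
    ∃ l : List (ℕ × UTy),
      List.foldl (fun B p => UTy.repl p.1 p.2 B) A l = UTy.psub σ A := by
  classical
  set F := UTy.fvb A with hF
  set N := max F (((List.range F).map fun n => UTy.fvb (σ n)).foldr max 0) with hN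
  have hFN : F ≤ N := le_max_left _ _
  have hσ : ∀ n, n < F → UTy.fvb (σ n) ≤ N := by
    intro n hn
    refine le_trans (mem_le_foldr_max _ _ ?_) (le_max_right _ _)
    simp only [List.mem_map, List.mem_range]
    exact ⟨n, hn, rfl⟩
  have P1 : ∀ k, k ≤ F →
      List.foldl (fun B p => UTy.repl p.1 p.2 B) A
        ((List.range k).map fun n => (n, UTy.var (N + n)))
        = UTy.psub (fun n => if n < k then UTy.var (N + n) else UTy.var n) A := by
    intro k
    induction k with
    | zero =>
      intro _
      simp only [List.range_zero, List.map_nil, List.foldl_nil]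
      rw [show (fun n => if n < 0 then UTy.var (N + n) else UTy.var n)
            = fun n => UTy.var n from by funext n; simp, UTy.psub_id]
    | succ k ih =>
      intro hk
      rw [List.range_succ, List.map_append, List.foldl_append, ih (by omega)]
      simp only [List.map_cons, List.map_nil, List.foldl_cons, List.foldl_nil]
      rw [UTy.repl_eq_psub, UTy.psub_psub]
      congr 1
      funext n
      by_cases h1 : n < k
      · simp only [if_pos h1, if_pos (by omega : n < k + 1)]
        show replS k (UTy.var (N + k)) 0 (N + n) = UTy.var (N + n)
        simp only [replS]
        rw [if_neg (by omega)]
      · by_cases h2 : n = k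
        · subst h2
          simp only [if_neg h1, if_pos (by omega : n < n + 1)]
          show replS n (UTy.var (N + n)) 0 n = UTy.var (N + n)
          simp only [replS]
          rw [if_pos (by omega), UTy.shift_zero]
        · simp only [if_neg h1, if_neg (by omega : ¬ n < k + 1)]
          show replS k (UTy.var (N + k)) 0 n = UTy.var n
          simp only [replS]
          rw [if_neg (by omega)]
  have P2 : ∀ k, k ≤ F →
      List.foldl (fun B p => UTy.repl p.1 p.2 B)
        (UTy.psub (fun n => if n < F then UTy.var (N + n) else UTy.var n) A)
        ((List.range k).map fun n => (N + n, σ n))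
        = UTy.psub (fun n => if n < k then σ n else UTy.var (N + n)) A := by
    intro k
    induction k with
    | zero =>
      intro _
      simp only [List.range_zero, List.map_nil, List.foldl_nil]
      apply UTy.psub_ext
      intro n hn
      rw [if_pos (by omega), if_neg (by omega)]
    | succ k ih =>
      intro hk
      rw [List.range_succ, List.map_append, List.foldl_append, ih (by omega)]
      simp only [List.map_cons, List.map_nil, List.foldl_cons, List.foldl_nil]
      rw [UTy.repl_eq_psub, UTy.psub_psub]
      apply UTy.psub_ext
      intro n hn
      by_cases h1 : n < k
      · simp only [if_pos h1, if_pos (by omega : n < k + 1)]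
        rw [← UTy.repl_eq_psub]
        exact UTy.repl_fresh (le_trans (hσ n (by omega)) (by omega))
      · by_cases h2 : n = k
        · subst h2
          simp only [if_neg h1, if_pos (by omega : n < n + 1)]
          show replS (N + n) (σ n) 0 (N + n) = σ n
          simp only [replS]
          rw [if_pos (by omega), UTy.shift_zero]
        · simp only [if_neg h1, if_neg (by omega : ¬ n < k + 1)]
          show replS (N + k) (σ k) 0 (N + n) = UTy.var (N + n)
          simp only [replS]
          rw [if_neg (by omega)]
  refine ⟨((List.range F).map fun n => (n, UTy.var (N + n)))
      ++ ((List.range F).map fun n => (N + n, σ n)), ?_⟩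
  rw [List.foldl_append, P1 F le_rfl, P2 F le_rfl]
  exact UTy.psub_ext A _ σ fun n hn => by rw [if_pos hn]

/-- **Arrow comparison** (Lemma 5).  If `U'→T' ≼ U→T`, then there exist
variables `X⃗` and unit types `V⃗` such that `U→T ≡ (U'→T')[V⃗/X⃗]`. -/
theorem arrow_comparison {U U' : UTy} {T T' : Ty}
    (h : TPre (.unit (.arrow U' T')) (.unit (.arrow U T))) :
    ∃ l : List (ℕ × UTy),
      TEq (.unit (.arrow U T))
        (l.foldl (fun A p => Ty.repl p.1 p.2 A) (.unit (.arrow U' T'))) := by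
  have main : ∀ {T₁ T₂ : Ty}, TPre T₁ T₂ →
      (∃ k σ, TEq T₁ (.unit (allN k (UTy.psub σ (.arrow U' T'))))) →
      ∃ k σ, TEq T₂ (.unit (allN k (UTy.psub σ (.arrow U' T')))) := by
    intro T₁ T₂ hp
    induction hp with
    | ofEq he =>
      rintro ⟨k, σ, h1⟩
      exact ⟨k, σ, he.symm.trans h1⟩
    | trans _ _ ih1 ih2 =>
      intro hg; exact ih2 (ih1 hg)
    | @ofSSub U₁ U₂ hs =>
      rintro ⟨k, σ, h1⟩
      have hU : UEq U₁ (allN k (UTy.psub σ (.arrow U' T'))) := TEq.unit_inv h1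
      cases hs with
      | gen X hg =>
        refine ⟨k + 1, fun n => UTy.psub (absS X k) (σ n), TEq.unit ?_⟩
        have c1 : UEq (UTy.absAux X 0 U₁)
            (UTy.absAux X 0 (allN k (UTy.psub σ (.arrow U' T')))) := by
          rw [UTy.absAux_eq_psub, UTy.absAux_eq_psub]
          exact UEq.psubC hU _
        have c2 : UTy.absAux X 0 (allN k (UTy.psub σ (.arrow U' T')))
            = allN k (UTy.psub (fun n => UTy.psub (absS X k) (σ n)) (.arrow U' T')) := by
          rw [absAux_allN]
          simp only [Nat.zero_add]
          rw [UTy.absAux_eq_psub, UTy.psub_psub]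
        rw [UTy.genAll] at hg
        exact hg.trans (UEq.all (c2 ▸ c1))
      | inst U₀ V₀ h1' h2' =>
        cases k with
        | zero =>
          exfalso
          have hh := (h1'.symm.trans hU).hd_eq
          simp [allN, UTy.hd, UTy.psub] at hh
        | succ k =>
          have hpeel : UEq U₀ (allN k (UTy.psub σ (.arrow U' T'))) := by
            have hp := (h1'.symm.trans hU).peel_congr
            simpa [UTy.peel, allN_succ] using hp
          refine ⟨k, fun n => UTy.psub (substS k V₀) (σ n), TEq.unit ?_⟩
          have c1 : UEq (UTy.subst 0 V₀ U₀)
              (UTy.subst 0 V₀ (allN k (UTy.psub σ (.arrow U' T')))) := by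
            rw [UTy.subst_eq_psub, UTy.subst_eq_psub]
            exact UEq.psubC hpeel _
          have c2 : UTy.subst 0 V₀ (allN k (UTy.psub σ (.arrow U' T')))
              = allN k (UTy.psub (fun n => UTy.psub (substS k V₀) (σ n)) (.arrow U' T')) := by
            rw [subst_allN]
            simp only [Nat.zero_add]
            rw [UTy.subst_eq_psub, UTy.psub_psub]
          exact h2'.trans (c2 ▸ c1)
  have base : ∃ k σ, TEq (Ty.unit (.arrow U' T'))
      (.unit (allN k (UTy.psub σ (.arrow U' T')))) :=
    ⟨0, fun n => .var n, by
      rw [show allN 0 (UTy.psub (fun n => UTy.var n) (.arrow U' T'))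
        = .arrow U' T' from UTy.psub_id _]
      exact TEq.refl _⟩
  obtain ⟨k, σ, hfin⟩ := main h base
  have hU : UEq (.arrow U T) (allN k (UTy.psub σ (.arrow U' T'))) := TEq.unit_inv hfin
  cases k with
  | succ k =>
    exfalso
    have hh := hU.hd_eq
    simp [allN, UTy.hd, UTy.psub] at hh
  | zero =>
    obtain ⟨l, hl⟩ := realize_psub σ (.arrow U' T')
    refine ⟨l, ?_⟩
    rw [foldl_repl_unit, hl]
    exact TEq.unit hU
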